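/- If ℓ is a weak harmonic labeling of a finite connected graph G with at least two vertices, then the vertex attaining the maximum label and the vertex attaining the minimum label are both leaves of G. -/

import Mathlib

/-- A weak harmonic labeling of a finite graph `G`: a bijection from the vertices onto
`{0, …, |V|−1} ⊆ ℤ` such that every non-leaf vertex's label is the average of its
neighbors' labels. -/
def IsWeakHarmonicLabeling {V : Type*} [Fintype V] (G : SimpleGraph V) (ℓ : V → ℤ) : Prop :=
  Set.BijOn ℓ Set.univ (Set.Icc 0 ((Fintype.card V : ℤ) - 1)) ∧
  ∀ v : V, (G.neighborSet v).ncard ≠ 1 →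
    ((G.neighborSet v).ncard : ℤ) * ℓ v = ∑ᶠ w ∈ G.neighborSet v, ℓ w

/-- In a weak harmonic labeling of a finite connected graph with at least two vertices,
the vertices attaining the minimum label `0` and the maximum label `|V|−1` are leaves. -/
theorem extremal_labels_are_leaves {V : Type*} [Fintype V] (G : SimpleGraph V)
    (hconn : G.Connected) (hcard : 2 ≤ Fintype.card V) (ℓ : V → ℤ)
    (hℓ : IsWeakHarmonicLabeling G ℓ) :
    ∀ v : V, (ℓ v = 0 ∨ ℓ v = (Fintype.card V : ℤ) - 1) → (G.neighborSet v).ncard = 1 := by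
  classical
  obtain ⟨hbij, hharm⟩ := hℓ
  have hmaps : ∀ w : V, ℓ w ∈ Set.Icc 0 ((Fintype.card V : ℤ) - 1) := fun w =>
    hbij.mapsTo (Set.mem_univ w)
  have hinj : Function.Injective ℓ := fun a b h =>
    hbij.injOn (Set.mem_univ a) (Set.mem_univ b) h
  intro v hv
  by_contra hdeg
  -- degree is positive since G is connected with ≥ 2 vertices
  have hnt : Nontrivial V := Fintype.one_lt_card_iff_nontrivial.mp (by omega)
  obtain ⟨u, hu⟩ := exists_ne v
  have hadj : ∃ w, G.Adj v w := by
    obtain ⟨p⟩ := hconn v u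
    cases p with
    | nil => exact absurd rfl hu.symm
    | cons h q => exact ⟨_, h⟩
  have hset : G.neighborSet v = ↑(G.neighborFinset v) := by
    simp [SimpleGraph.neighborFinset]
  have hncard : (G.neighborSet v).ncard = G.degree v := by
    conv_lhs => rw [hset]
    rw [Set.ncard_coe_finset, SimpleGraph.card_neighborFinset_eq_degree]
  have hdpos : 0 < G.degree v := (G.degree_pos_iff_exists_adj v).mpr hadj
  have hsum : ((G.neighborSet v).ncard : ℤ) * ℓ v = ∑ w ∈ G.neighborFinset v, ℓ w := by
    rw [hharm v hdeg]
    conv_lhs => rw [hset]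
    rw [finsum_mem_coe_finset]
  rw [hncard] at hsum hdeg
  have hne : ∀ w ∈ G.neighborFinset v, ℓ w ≠ ℓ v := by
    intro w hw
    have : w ≠ v := fun h => G.loopless.irrefl v (h ▸ (G.mem_neighborFinset v w).mp hw).symm
    exact fun h => this (hinj h)
  rcases hv with h0 | h1
  · -- minimum case: each neighbor label ≥ 1
    have hge : ∀ w ∈ G.neighborFinset v, 1 ≤ ℓ w := by
      intro w hw
      have := (hmaps w).1
      have := hne w hw
      omega
    have hb : (G.degree v : ℤ) * 1 ≤ ∑ w ∈ G.neighborFinset v, ℓ w := by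
      rw [mul_one]
      calc (G.degree v : ℤ) = ∑ _w ∈ G.neighborFinset v, (1 : ℤ) := by
            simp [SimpleGraph.card_neighborFinset_eq_degree]
        _ ≤ _ := Finset.sum_le_sum hge
    rw [← hsum, h0, mul_zero, mul_one] at hb
    omega
  · -- maximum case: each neighbor label ≤ n - 2
    have hle : ∀ w ∈ G.neighborFinset v, ℓ w ≤ (Fintype.card V : ℤ) - 2 := by
      intro w hw
      have := (hmaps w).2
      have := hne w hw
      omega
    have hb : ∑ w ∈ G.neighborFinset v, ℓ w ≤ (G.degree v : ℤ) * ((Fintype.card V : ℤ) - 2) := by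
      calc ∑ w ∈ G.neighborFinset v, ℓ w ≤ ∑ _w ∈ G.neighborFinset v, ((Fintype.card V : ℤ) - 2) :=
            Finset.sum_le_sum hle
        _ = _ := by simp [SimpleGraph.card_neighborFinset_eq_degree]; ring
    rw [← hsum, h1] at hb
    have : (G.degree v : ℤ) ≤ 0 := by nlinarith
    omega
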